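/- Let X be a connected, non-compact, locally connected, locally compact Hausdorff space and let K ⊆ X be a compact subspace. Then the family of connected components of X∖K contains only finitely many unbounded components (i.e., only finitely many components whose closure in X is not compact). -/
import Mathlib

open Set

/-- A preconnected set meeting both `t` and its complement meets the frontier of `t`. -/
lemma preconn_inter_frontier {X : Type*} [TopologicalSpace X] {s t : Set X}
    (hs : IsPreconnected s) (h1 : (s ∩ t).Nonempty) (h2 : (s \ t).Nonempty) :
    (s ∩ frontier t).Nonempty := by
  by_contra h
  rw [not_nonempty_iff_eq_empty] at h
  have hsub : s ⊆ interior t ∪ (closure t)ᶜ := by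
    intro x hx
    by_cases hxt : x ∈ interior t
    · exact Or.inl hxt
    · refine Or.inr fun hxc => ?_
      have hmem : x ∈ s ∩ frontier t := ⟨hx, hxc, hxt⟩
      rw [h] at hmem
      exact hmem
  have hdisj : Disjoint (interior t) (closure t)ᶜ :=
    disjoint_compl_right.mono interior_subset_closure le_rfl
  rcases hs.subset_or_subset isOpen_interior (isClosed_closure.isOpen_compl) hdisj hsub with
    hsu | hsu
  · obtain ⟨x, hxs, hxt⟩ := h2
    exact hxt (interior_subset (hsu hxs))
  · obtain ⟨x, hxs, hxt⟩ := h1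
    exact (hsu hxs) (subset_closure hxt)

/-- Points of the closure of a connected component of `Kᶜ` that lie in `Kᶜ` belong to the
component itself. -/
lemma closure_inter_compl_subset {X : Type*} [TopologicalSpace X] [LocallyConnectedSpace X]
    {K : Set X} (hKo : IsOpen Kᶜ) {x : X} {y : X}
    (hy : y ∈ closure (connectedComponentIn Kᶜ x)) (hyK : y ∈ Kᶜ) :
    y ∈ connectedComponentIn Kᶜ x := by
  have hVopen : IsOpen (connectedComponentIn Kᶜ y) := hKo.connectedComponentIn
  have hyV : y ∈ connectedComponentIn Kᶜ y := mem_connectedComponentIn hyK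
  obtain ⟨z, hzV, hzU⟩ := mem_closure_iff.mp hy _ hVopen hyV
  have h1 : connectedComponentIn Kᶜ y = connectedComponentIn Kᶜ z := connectedComponentIn_eq hzV
  have h2 : connectedComponentIn Kᶜ x = connectedComponentIn Kᶜ z := connectedComponentIn_eq hzU
  rw [h2, ← h1]
  exact hyV

/-- Let `X` be a connected, non-compact, locally connected, locally compact
Hausdorff space and `K ⊆ X` a compact subspace.  Then among the connected components of
`X \ K` there are only finitely many *unbounded* ones, i.e. components whose closure in `X`
is not compact. -/
theorem finitely_many_unbounded_components {X : Type*} [TopologicalSpace X]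
    [ConnectedSpace X] [NoncompactSpace X] [LocallyConnectedSpace X] [LocallyCompactSpace X]
    [T2Space X] {K : Set X} (hK : IsCompact K) :
    {U : Set X | (∃ x ∈ Kᶜ, U = connectedComponentIn Kᶜ x) ∧ ¬ IsCompact (closure U)}.Finite := by
  obtain ⟨x₀⟩ := (inferInstance : Nonempty X)
  obtain ⟨L, hL, hKL⟩ := exists_compact_superset (hK.union (isCompact_singleton : IsCompact {x₀}))
  have hKo : IsOpen Kᶜ := hK.isClosed.isOpen_compl
  have hLc : IsClosed L := hL.isClosed
  have hfL : IsCompact (frontier L) := hL.of_isClosed_subset isClosed_frontier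
    (by rw [hLc.frontier_eq]; exact diff_subset)
  have hfK : frontier L ⊆ Kᶜ := fun y hy hyK => hy.2 (hKL (Or.inl hyK))
  -- cover frontier L by components of Kᶜ
  have hopen : ∀ y : X, IsOpen (connectedComponentIn Kᶜ y) := by
    intro y
    by_cases hy : y ∈ Kᶜ
    · exact hKo.connectedComponentIn
    · rw [connectedComponentIn_eq_empty hy]; exact isOpen_empty
  have hcover : frontier L ⊆ ⋃ y : X, connectedComponentIn Kᶜ y := fun z hz =>
    mem_iUnion.mpr ⟨z, mem_connectedComponentIn (hfK hz)⟩
  obtain ⟨t, ht⟩ := hfL.elim_finite_subcover _ hopen hcover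
  refine ((t.finite_toSet.image (fun y => connectedComponentIn Kᶜ y)).subset ?_)
  rintro U ⟨⟨x, hx, rfl⟩, hnc⟩
  set U := connectedComponentIn Kᶜ x with hU
  have hxU : x ∈ U := mem_connectedComponentIn hx
  have hconn : IsConnected U := isConnected_connectedComponentIn_iff.mpr hx
  -- closure U meets L
  have hmeet : (closure U ∩ L).Nonempty := by
    by_cases huniv : U = univ
    · exact ⟨x₀, subset_closure (huniv ▸ mem_univ x₀), interior_subset (hKL (Or.inr rfl))⟩
    · obtain ⟨y, hy⟩ := nonempty_frontier_iff.mpr ⟨⟨x, hxU⟩, huniv⟩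
      have hyc : y ∈ closure U := frontier_subset_closure hy
      have hyK : y ∈ K := by
        by_contra hyK
        exact hy.2 ((hKo.connectedComponentIn (x := x)).interior_eq ▸
          closure_inter_compl_subset hKo hyc hyK)
      exact ⟨y, hyc, interior_subset (hKL (Or.inl hyK))⟩
  -- closure U is not contained in L
  have hnot : (closure U \ L).Nonempty := by
    rw [diff_nonempty]
    intro hsub
    exact hnc (hL.of_isClosed_subset isClosed_closure hsub)
  -- hence closure U meets frontier L
  obtain ⟨z, hzc, hzf⟩ := preconn_inter_frontier (hconn.isPreconnected.closure) hmeet hnot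
  have hzU : z ∈ U := closure_inter_compl_subset hKo hzc (hfK hzf)
  obtain ⟨y, hyt, hzy⟩ := mem_iUnion₂.mp (ht hzf)
  refine ⟨y, hyt, ?_⟩
  calc connectedComponentIn Kᶜ y = connectedComponentIn Kᶜ z := connectedComponentIn_eq hzy
    _ = U := (connectedComponentIn_eq hzU).symm
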